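/- Let n ≥ 5 be an odd positive integer, let α₁, α₂ and β₁, β₂ be integers each pair satisfying conditions (2.4), and assume gcd(α₁β₂ − α₂β₁, n) = 1. Define M : (ZMod n)² → ℕ by M(i,j) = n·(α₁i+α₂j).val + (β₁i+β₂j).val, where .val denotes the canonical representative in {0,...,n−1}. Then M is a pandiagonal magic square: (a) M is injective and every value of M lies in {0, 1, ..., n²−1} (so M is a bijection onto {0,...,n²−1}); and (b) for every direction (a,b) in {(1,0), (0,1), (1,1), (1,−1)} and every point (i₀,j₀) ∈ (ZMod n)², the sum over t ∈ ZMod n of M(i₀+t·a, j₀+t·b) equals n(n²−1)/2. -/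

import Mathlib

private lemma zmod_sum_val (n : ℕ) [NeZero n] :
    ∑ x : ZMod n, x.val = ∑ i ∈ Finset.range n, i := by
  refine Finset.sum_nbij' (fun x => x.val) (fun i => (i : ZMod n)) ?_ ?_ ?_ ?_ ?_ <;> intros <;>
    simp_all [ZMod.val_lt, ZMod.val_cast_of_lt, ZMod.natCast_val, Finset.mem_range,
      Nat.mod_eq_of_lt]

private lemma unit_of_gcd (n : ℕ) (a : ℤ) (h : Int.gcd a n = 1) :
    IsUnit ((a : ZMod n)) := by
  rw [← Int.isCoprime_iff_gcd_eq_one] at h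
  obtain ⟨u, v, huv⟩ := h
  apply IsUnit.of_mul_eq_one (u : ZMod n)
  have := congrArg (Int.cast : ℤ → ZMod n) huv
  push_cast at this
  rw [ZMod.natCast_self] at this
  linear_combination this

private lemma sum_val_shift (n : ℕ) [NeZero n] (A c : ZMod n) (hc : IsUnit c) :
    ∑ t : ZMod n, (A + t * c).val = ∑ x : ZMod n, x.val := by
  apply Fintype.sum_bijective (fun t : ZMod n => A + t * c) ?_ _ _ (fun t => rfl)
  refine Finite.injective_iff_bijective.mp ?_
  intro s t hst
  have h1 : s * c = t * c := by
    have : A + s * c = A + t * c := hst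
    simpa using this
  exact hc.mul_right_cancel h1

private lemma line_sum (n : ℕ) [NeZero n] (hodd : Odd n) (A B cA cB : ZMod n)
    (hA : IsUnit cA) (hB : IsUnit cB) :
    ∑ t : ZMod n, (n * (A + t * cA).val + (B + t * cB).val) = n * (n ^ 2 - 1) / 2 := by
  obtain ⟨m, hm⟩ := hodd
  set S := ∑ i ∈ Finset.range n, i with hSdef
  have hsum : ∑ t : ZMod n, (n * (A + t * cA).val + (B + t * cB).val) = n * S + S := by
    rw [Finset.sum_add_distrib, ← Finset.mul_sum, sum_val_shift n A cA hA,
      sum_val_shift n B cB hB, zmod_sum_val]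
  rw [hsum]
  have hS : S * 2 = n * (n - 1) := Finset.sum_range_id_mul_two n
  have hS2 : S = (2 * m + 1) * m := by
    have h2 : S * 2 = ((2 * m + 1) * m) * 2 := by
      rw [hS, hm]
      have h3 : 2 * m + 1 - 1 = 2 * m := by omega
      rw [h3]; ring
    omega
  have hsq : n ^ 2 - 1 = 4 * (m * m) + 4 * m := by
    have : n ^ 2 = (4 * (m * m) + 4 * m) + 1 := by rw [hm]; ring
    rw [this, Nat.add_sub_cancel]
  have key : n * (n ^ 2 - 1) = (n * S + S) * 2 := by
    rw [hsq, hS2, hm]; ring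
  exact (Nat.div_eq_of_eq_mul_left (by norm_num) key).symm

theorem magic_pandiagonal_square
    (n : ℕ) (hn : 5 ≤ n) (hodd : Odd n) [NeZero n] (α₁ α₂ β₁ β₂ : ℤ)
    (hα1 : Int.gcd α₁ n = 1) (hα2 : Int.gcd α₂ n = 1)
    (hα3 : Int.gcd (α₁ + α₂) n = 1) (hα4 : Int.gcd (α₁ - α₂) n = 1)
    (hβ1 : Int.gcd β₁ n = 1) (hβ2 : Int.gcd β₂ n = 1)
    (hβ3 : Int.gcd (β₁ + β₂) n = 1) (hβ4 : Int.gcd (β₁ - β₂) n = 1)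
    (hd : Int.gcd (α₁ * β₂ - α₂ * β₁) n = 1)
    (M : ZMod n → ZMod n → ℕ)
    (hM : ∀ i j : ZMod n,
      M i j = n * ((α₁ : ZMod n) * i + (α₂ : ZMod n) * j).val +
        ((β₁ : ZMod n) * i + (β₂ : ZMod n) * j).val) :
    (Function.Injective fun v : ZMod n × ZMod n => M v.1 v.2) ∧
    (∀ i j : ZMod n, M i j < n ^ 2) ∧
    (∀ a b : ZMod n,
      (a, b) ∈ ({(1, 0), (0, 1), (1, 1), (1, -1)} : Set (ZMod n × ZMod n)) →
      ∀ i₀ j₀ : ZMod n,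
        ∑ t : ZMod n, M (i₀ + t * a) (j₀ + t * b) = n * (n ^ 2 - 1) / 2) := by
  have hn0 : 0 < n := Nat.pos_of_ne_zero (NeZero.ne n)
  have hdet : IsUnit ((α₁ * β₂ - α₂ * β₁ : ℤ) : ZMod n) := unit_of_gcd _ _ hd
  refine ⟨?_, ?_, ?_⟩
  · rintro ⟨i, j⟩ ⟨i', j'⟩ h
    simp only [hM] at h
    set A := ((α₁ : ZMod n) * i + (α₂ : ZMod n) * j).val with hAdef
    set A' := ((α₁ : ZMod n) * i' + (α₂ : ZMod n) * j').val with hA'def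
    set B := ((β₁ : ZMod n) * i + (β₂ : ZMod n) * j).val with hBdef
    set B' := ((β₁ : ZMod n) * i' + (β₂ : ZMod n) * j').val with hB'def
    have hB : B < n := ZMod.val_lt _
    have hB' : B' < n := ZMod.val_lt _
    have hBB : B = B' := by
      have := congrArg (· % n) h
      simpa [Nat.mul_add_mod, Nat.mod_eq_of_lt hB, Nat.mod_eq_of_lt hB'] using this
    have hAA : A = A' := by
      have hnA : n * A = n * A' := by omega
      exact Nat.eq_of_mul_eq_mul_left hn0 hnA
    have eqα : (α₁ : ZMod n) * i + (α₂ : ZMod n) * j =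
        (α₁ : ZMod n) * i' + (α₂ : ZMod n) * j' := ZMod.val_injective n hAA
    have eqβ : (β₁ : ZMod n) * i + (β₂ : ZMod n) * j =
        (β₁ : ZMod n) * i' + (β₂ : ZMod n) * j' := ZMod.val_injective n hBB
    have hx : ((α₁ * β₂ - α₂ * β₁ : ℤ) : ZMod n) * (i - i') = 0 := by
      push_cast
      linear_combination (β₂ : ZMod n) * eqα - (α₂ : ZMod n) * eqβ
    have hy : ((α₁ * β₂ - α₂ * β₁ : ℤ) : ZMod n) * (j - j') = 0 := by
      push_cast
      linear_combination (α₁ : ZMod n) * eqβ - (β₁ : ZMod n) * eqα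
    have hi : i = i' := by
      have := (hdet.mul_right_eq_zero).mp hx
      exact sub_eq_zero.mp this
    have hj : j = j' := by
      have := (hdet.mul_right_eq_zero).mp hy
      exact sub_eq_zero.mp this
    simp [hi, hj]
  · intro i j
    rw [hM]
    have h1 : ((α₁ : ZMod n) * i + (α₂ : ZMod n) * j).val < n := ZMod.val_lt _
    have h2 : ((β₁ : ZMod n) * i + (β₂ : ZMod n) * j).val < n := ZMod.val_lt _
    calc n * ((α₁ : ZMod n) * i + (α₂ : ZMod n) * j).val +
          ((β₁ : ZMod n) * i + (β₂ : ZMod n) * j).val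
        < n * ((α₁ : ZMod n) * i + (α₂ : ZMod n) * j).val + n := by omega
      _ = n * (((α₁ : ZMod n) * i + (α₂ : ZMod n) * j).val + 1) := by ring
      _ ≤ n * n := Nat.mul_le_mul_left n (by omega)
      _ = n ^ 2 := (sq n).symm
  · intro a b hab i₀ j₀
    have huα1 : IsUnit ((α₁ : ZMod n)) := unit_of_gcd _ _ hα1
    have huα2 : IsUnit ((α₂ : ZMod n)) := unit_of_gcd _ _ hα2
    have huα3 : IsUnit ((α₁ : ZMod n) + (α₂ : ZMod n)) := by
      have := unit_of_gcd _ _ hα3; rwa [Int.cast_add] at this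
    have huα4 : IsUnit ((α₁ : ZMod n) - (α₂ : ZMod n)) := by
      have := unit_of_gcd _ _ hα4; rwa [Int.cast_sub] at this
    have huβ1 : IsUnit ((β₁ : ZMod n)) := unit_of_gcd _ _ hβ1
    have huβ2 : IsUnit ((β₂ : ZMod n)) := unit_of_gcd _ _ hβ2
    have huβ3 : IsUnit ((β₁ : ZMod n) + (β₂ : ZMod n)) := by
      have := unit_of_gcd _ _ hβ3; rwa [Int.cast_add] at this
    have huβ4 : IsUnit ((β₁ : ZMod n) - (β₂ : ZMod n)) := by
      have := unit_of_gcd _ _ hβ4; rwa [Int.cast_sub] at this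
    set A : ZMod n := (α₁ : ZMod n) * i₀ + (α₂ : ZMod n) * j₀ with hA
    set B : ZMod n := (β₁ : ZMod n) * i₀ + (β₂ : ZMod n) * j₀ with hB
    have key : ∀ cA cB : ZMod n, IsUnit cA → IsUnit cB →
        ((α₁ : ZMod n) * a + (α₂ : ZMod n) * b = cA) →
        ((β₁ : ZMod n) * a + (β₂ : ZMod n) * b = cB) →
        ∑ t : ZMod n, M (i₀ + t * a) (j₀ + t * b) = n * (n ^ 2 - 1) / 2 := by
      intro cA cB hcA hcB hea heb
      calc ∑ t : ZMod n, M (i₀ + t * a) (j₀ + t * b)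
          = ∑ t : ZMod n, (n * (A + t * cA).val + (B + t * cB).val) := by
            refine Finset.sum_congr rfl fun t _ => ?_
            rw [hM]
            rw [show (α₁ : ZMod n) * (i₀ + t * a) + (α₂ : ZMod n) * (j₀ + t * b)
                = A + t * cA by rw [← hea, hA]; ring]
            rw [show (β₁ : ZMod n) * (i₀ + t * a) + (β₂ : ZMod n) * (j₀ + t * b)
                = B + t * cB by rw [← heb, hB]; ring]
        _ = n * (n ^ 2 - 1) / 2 := line_sum n hodd A B cA cB hcA hcB
    simp only [Set.mem_insert_iff, Set.mem_singleton_iff, Prod.mk.injEq] at hab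
    rcases hab with ⟨rfl, rfl⟩ | ⟨rfl, rfl⟩ | ⟨rfl, rfl⟩ | ⟨rfl, rfl⟩
    · exact key _ _ huα1 huβ1 (by ring) (by ring)
    · exact key _ _ huα2 huβ2 (by ring) (by ring)
    · exact key _ _ huα3 huβ3 (by ring) (by ring)
    · exact key _ _ huα4 huβ4 (by ring) (by ring)
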